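/- For every n ≥ 1, if k is an integer nearest to n/2 + (1/2)·log₂((n+1)/2), then 0 ≤ k ≤ n, and both 2^k ≥ (1/2)·√(n+1)·2^(n/2) and (k+1)·2^(n−k) ≥ (1/2)·√(n+1)·2^(n/2) hold. -/

import Mathlib

/-- For `n ≥ 1`, if `k` is an integer nearest to `n/2 + (1/2)·log₂((n+1)/2)`,
then `0 ≤ k ≤ n`, `2^k ≥ (1/2)·√(n+1)·2^(n/2)`, and
`(k+1)·2^(n-k) ≥ (1/2)·√(n+1)·2^(n/2)`. -/
theorem nearest_integer_bounds (n : ℕ) (hn : 1 ≤ n) (k : ℤ)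
    (hk : |(k : ℝ) - ((n : ℝ) / 2 + (1 / 2) * Real.logb 2 ((n + 1) / 2))| ≤ 1 / 2) :
    0 ≤ k ∧ k ≤ n ∧
    (1 / 2 : ℝ) * Real.sqrt (n + 1) * 2 ^ ((n : ℝ) / 2) ≤ (2 : ℝ) ^ k ∧
    (1 / 2 : ℝ) * Real.sqrt (n + 1) * 2 ^ ((n : ℝ) / 2)
      ≤ ((k : ℝ) + 1) * (2 : ℝ) ^ ((n : ℤ) - k) := by
  have hn1 : (1:ℝ) ≤ (n:ℝ) := by exact_mod_cast hn
  set L := Real.logb 2 (((n:ℝ) + 1) / 2) with hLdef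
  have harg1 : (1:ℝ) ≤ ((n:ℝ)+1)/2 := by linarith
  have hLnn : 0 ≤ L := Real.logb_nonneg one_lt_two harg1
  have hnat : (n:ℝ) + 1 ≤ (2:ℝ) ^ ((n:ℝ)) := by
    rw [Real.rpow_natCast]
    exact_mod_cast (Nat.lt_two_pow_self : n < 2 ^ n)
  have hLle : L ≤ (n:ℝ) - 1 := by
    have h1 : ((n:ℝ)+1)/2 ≤ (2:ℝ) ^ ((n:ℝ) - 1) := by
      rw [Real.rpow_sub (by norm_num), Real.rpow_one]
      linarith [hnat]
    calc L ≤ Real.logb 2 ((2:ℝ) ^ ((n:ℝ) - 1)) := by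
            rw [hLdef]; gcongr; norm_num
      _ = (n:ℝ) - 1 := Real.logb_rpow (by norm_num) (by norm_num)
  rw [abs_le] at hk
  obtain ⟨hk1, hk2⟩ := hk
  have hklb : (n:ℝ)/2 + L/2 - 1/2 ≤ (k:ℝ) := by linarith
  have hkub : (k:ℝ) ≤ (n:ℝ)/2 + L/2 + 1/2 := by linarith
  have hk0 : 0 ≤ k := by
    have : (0:ℝ) ≤ (k:ℝ) := by linarith
    exact_mod_cast this
  have hkn : k ≤ (n:ℤ) := by
    have : (k:ℝ) ≤ (n:ℝ) := by linarith
    exact_mod_cast this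
  -- rpow facts
  have hs2 : Real.sqrt 2 * Real.sqrt 2 = 2 := Real.mul_self_sqrt (by norm_num)
  have hs2pos : 0 < Real.sqrt 2 := Real.sqrt_pos.mpr (by norm_num)
  have hspos : 0 < Real.sqrt ((n:ℝ)+1) := Real.sqrt_pos.mpr (by linarith)
  have hss : Real.sqrt ((n:ℝ)+1) * Real.sqrt ((n:ℝ)+1) = (n:ℝ)+1 :=
    Real.mul_self_sqrt (by linarith)
  have h2L : (2:ℝ) ^ L = ((n:ℝ)+1)/2 := Real.rpow_logb (by norm_num) (by norm_num) (by linarith)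
  have h2L2 : (2:ℝ) ^ (L/2) = Real.sqrt ((n:ℝ)+1) / Real.sqrt 2 := by
    have e1 : (2:ℝ)^(L/2) = ((2:ℝ)^L)^((1:ℝ)/2) := by
      rw [← Real.rpow_mul (by norm_num)]; ring_nf
    rw [e1, h2L, ← Real.sqrt_eq_rpow, Real.sqrt_div (by linarith)]
  have h2half : (2:ℝ) ^ ((1:ℝ)/2) = Real.sqrt 2 := by
    rw [Real.sqrt_eq_rpow]
  have key : (1 / 2 : ℝ) * Real.sqrt ((n:ℝ) + 1) * 2 ^ ((n : ℝ) / 2)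
      = (2:ℝ) ^ ((n:ℝ)/2 + L/2 - 1/2) := by
    rw [sub_eq_add_neg, Real.rpow_add (by norm_num), Real.rpow_add (by norm_num), h2L2,
      Real.rpow_neg (by norm_num), h2half]
    field_simp
    ring_nf
    norm_num
  have key2 : (2:ℝ) ^ ((n:ℝ)/2 - L/2 - 1/2) = (2:ℝ) ^ ((n:ℝ)/2) / Real.sqrt ((n:ℝ)+1) := by
    rw [sub_eq_add_neg, sub_eq_add_neg, Real.rpow_add (by norm_num),
      Real.rpow_add (by norm_num), Real.rpow_neg (by norm_num), Real.rpow_neg (by norm_num),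
      h2L2, h2half]
    field_simp
  refine ⟨hk0, hkn, ?_, ?_⟩
  · rw [key, ← Real.rpow_intCast 2 k]
    exact (Real.rpow_le_rpow_left_iff one_lt_two).mpr (by linarith)
  · have hz : (2:ℝ) ^ ((n:ℤ) - k) = (2:ℝ) ^ ((n:ℝ) - (k:ℝ)) := by
      rw [← Real.rpow_intCast 2 ((n:ℤ) - k)]
      push_cast
      ring_nf
    have h1 : (2:ℝ) ^ ((n:ℝ)/2) / Real.sqrt ((n:ℝ)+1) ≤ (2:ℝ) ^ ((n:ℝ) - (k:ℝ)) := by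
      rw [← key2]
      exact (Real.rpow_le_rpow_left_iff one_lt_two).mpr (by linarith)
    have hk1' : ((n:ℝ)+1)/2 ≤ (k:ℝ) + 1 := by linarith
    have hp : (0:ℝ) < (2:ℝ) ^ ((n:ℝ)/2) := Real.rpow_pos_of_pos (by norm_num) _
    calc (1 / 2 : ℝ) * Real.sqrt ((n:ℝ) + 1) * 2 ^ ((n : ℝ) / 2)
        = ((Real.sqrt ((n:ℝ)+1) * Real.sqrt ((n:ℝ)+1))/2) * ((2:ℝ) ^ ((n:ℝ)/2) / Real.sqrt ((n:ℝ)+1)) := by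
          have hss' : Real.sqrt (1+(n:ℝ)) * Real.sqrt (1+(n:ℝ)) = 1+(n:ℝ) :=
            Real.mul_self_sqrt (by linarith)
          field_simp
      _ = (((n:ℝ)+1)/2) * ((2:ℝ) ^ ((n:ℝ)/2) / Real.sqrt ((n:ℝ)+1)) := by rw [hss]
      _ ≤ ((k:ℝ)+1) * ((2:ℝ) ^ ((n:ℝ)/2) / Real.sqrt ((n:ℝ)+1)) := by
          apply mul_le_mul_of_nonneg_right hk1' (by positivity)
      _ ≤ ((k:ℝ)+1) * (2:ℝ) ^ ((n:ℝ) - (k:ℝ)) := by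
          apply mul_le_mul_of_nonneg_left h1 (by linarith)
      _ = ((k:ℝ)+1) * (2:ℝ) ^ ((n:ℤ) - k) := by rw [hz]
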